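/- Let X = {x ∈ ℝ^n : H_x x ≤ h_x} be a nonempty polyhedron and Y = {y ∈ ℝ^m : H_y y ≤ h_y} a polyhedron. Given γ ∈ ℝ^m and Γ ∈ ℝ^{m×n}, the affine image γ + Γ·X is contained in Y if and only if there exists a matrix Λ with nonnegative entries such that Λ H_x = H_y Γ and Λ h_x ≤ h_y − H_y γ (componentwise). -/

import Mathlib

open Matrix
open scoped InnerProductSpace

lemma coneSet_isClosed (d : ℕ) : ∀ (k : ℕ) (v : Fin k → EuclideanSpace ℝ (Fin d)),
    IsClosed {x : EuclideanSpace ℝ (Fin d) |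
      ∃ l : Fin k → ℝ, (∀ i, 0 ≤ l i) ∧ ∑ i, l i • v i = x} := by
  intro k
  induction k with
  | zero =>
    intro v
    have : {x : EuclideanSpace ℝ (Fin d) |
        ∃ l : Fin 0 → ℝ, (∀ i, 0 ≤ l i) ∧ ∑ i, l i • v i = x} = {0} := by
      ext x
      simp [eq_comm]
    rw [this]
    exact isClosed_singleton
  | succ k IH =>
    intro v
    by_cases hli : LinearIndependent ℝ v
    · -- independent case: closed embedding
      let T : (Fin (k+1) → ℝ) →ₗ[ℝ] EuclideanSpace ℝ (Fin d) :=
      { toFun := fun l => ∑ i, l i • v i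
        map_add' := by
          intro a b
          simp [add_smul, Finset.sum_add_distrib]
        map_smul' := by
          intro c a
          simp [mul_smul, Finset.smul_sum] }
      have hker : LinearMap.ker T = ⊥ := by
        rw [LinearMap.ker_eq_bot']
        intro g hg
        have := (Fintype.linearIndependent_iff.mp hli) g hg
        funext i
        exact this i
      have hce := LinearMap.isClosedEmbedding_of_injective hker
      have hSc : IsClosed {l : Fin (k+1) → ℝ | ∀ i, 0 ≤ l i} := by
        have : {l : Fin (k+1) → ℝ | ∀ i, 0 ≤ l i} = ⋂ i, {l | 0 ≤ l i} := by
          ext l; simp [Set.mem_iInter]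
        rw [this]
        exact isClosed_iInter fun i => isClosed_le continuous_const (continuous_apply i)
      have himg : {x : EuclideanSpace ℝ (Fin d) |
          ∃ l : Fin (k+1) → ℝ, (∀ i, 0 ≤ l i) ∧ ∑ i, l i • v i = x}
          = T '' {l | ∀ i, 0 ≤ l i} := by
        ext x
        simp [T, Set.mem_image]
      rw [himg]
      exact hce.isClosedMap _ hSc
    · -- dependent case
      obtain ⟨g, hg0, i₀, hgi⟩ := Fintype.not_linearIndependent_iff.mp hli
      have hpos : ∃ c : Fin (k+1) → ℝ, (∑ i, c i • v i = 0) ∧ ∃ i, 0 < c i := by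
        rcases lt_trichotomy (g i₀) 0 with h | h | h
        · refine ⟨-g, ?_, ⟨i₀, by simpa using by linarith⟩⟩
          simp [neg_smul, Finset.sum_neg_distrib, hg0]
        · exact absurd h hgi
        · exact ⟨g, hg0, i₀, h⟩
      obtain ⟨c, hc0, hcpos⟩ := hpos
      set s : Finset (Fin (k+1)) := Finset.univ.filter (fun i => 0 < c i) with hs
      have hs_ne : s.Nonempty := by
        obtain ⟨i, hi⟩ := hcpos
        exact ⟨i, by simp [hs, hi]⟩
      have hsplit : {x : EuclideanSpace ℝ (Fin d) |
          ∃ l : Fin (k+1) → ℝ, (∀ i, 0 ≤ l i) ∧ ∑ i, l i • v i = x}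
          = ⋃ i ∈ s, {x : EuclideanSpace ℝ (Fin d) |
              ∃ m : Fin k → ℝ, (∀ j, 0 ≤ m j) ∧ ∑ j, m j • v (i.succAbove j) = x} := by
        ext x
        constructor
        · rintro ⟨l, hl, hsum⟩
          obtain ⟨j₀, hj₀s, hmin⟩ := s.exists_min_image (fun i => l i / c i) hs_ne
          have hcj₀ : 0 < c j₀ := by
            simpa [hs] using hj₀s
          set t : ℝ := l j₀ / c j₀ with ht_def
          have ht : 0 ≤ t := div_nonneg (hl j₀) hcj₀.le
          set μ : Fin (k+1) → ℝ := fun j => l j - t * c j with hμ_def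
          have hμ : ∀ j, 0 ≤ μ j := by
            intro j
            by_cases hcj : 0 < c j
            · have hmj := hmin j (by simp [hs, hcj])
              have : t * c j ≤ l j := by
                rw [ht_def, div_le_div_iff₀ hcj₀ hcj] at hmj
                rw [ht_def, div_mul_eq_mul_div, div_le_iff₀ hcj₀]
                exact hmj
              simpa [hμ_def] using this
            · push_neg at hcj
              have : t * c j ≤ 0 := mul_nonpos_of_nonneg_of_nonpos ht hcj
              have := hl j
              simp only [hμ_def]
              linarith
          have hμj₀ : μ j₀ = 0 := by
            simp only [hμ_def, ht_def]
            field_simp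
            ring
          have hμsum : ∑ j, μ j • v j = x := by
            simp only [hμ_def, sub_smul, mul_smul, Finset.sum_sub_distrib]
            rw [← Finset.smul_sum, hc0, smul_zero, sub_zero, hsum]
          refine Set.mem_biUnion hj₀s ⟨fun j => μ (j₀.succAbove j), fun j => hμ _, ?_⟩
          have := Fin.sum_univ_succAbove (fun j => μ j • v j) j₀
          rw [hμsum, hμj₀, zero_smul, zero_add] at this
          exact this.symm
        · simp only [Set.mem_iUnion]
          rintro ⟨i, his, m, hm, hsum⟩
          refine ⟨i.insertNth 0 m, ?_, ?_⟩
          · intro j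
            by_cases hji : j = i
            · subst hji; simp
            · obtain ⟨j', rfl⟩ := Fin.exists_succAbove_eq hji
              simpa using hm j'
          · have hf := Fin.sum_univ_succAbove
              (fun j => (i.insertNth 0 m : Fin (k+1) → ℝ) j • v j) i
            simp only [Fin.insertNth_apply_same, Fin.insertNth_apply_succAbove, zero_smul,
              zero_add] at hf
            rw [hf]
            exact hsum
      rw [hsplit]
      exact Set.Finite.isClosed_biUnion s.finite_toSet fun i _ => IH (fun j => v (i.succAbove j))

lemma mem_cone_of_dual {d k : ℕ} (v : Fin k → EuclideanSpace ℝ (Fin d))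
    (b : EuclideanSpace ℝ (Fin d))
    (h : ∀ y : EuclideanSpace ℝ (Fin d), (∀ i, 0 ≤ ⟪v i, y⟫_ℝ) → 0 ≤ ⟪b, y⟫_ℝ) :
    ∃ l : Fin k → ℝ, (∀ i, 0 ≤ l i) ∧ ∑ i, l i • v i = b := by
  by_contra hb
  let K : ConvexCone ℝ (EuclideanSpace ℝ (Fin d)) :=
  { carrier := {x | ∃ l : Fin k → ℝ, (∀ i, 0 ≤ l i) ∧ ∑ i, l i • v i = x}
    smul_mem' := by
      rintro c hc x ⟨l, hl, rfl⟩
      exact ⟨c • l, fun i => mul_nonneg hc.le (hl i), by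
        simp [Finset.smul_sum, mul_smul]⟩
    add_mem' := by
      rintro x ⟨l, hl, rfl⟩ y ⟨l', hl', rfl⟩
      exact ⟨l + l', fun i => add_nonneg (hl i) (hl' i), by
        simp [add_smul, Finset.sum_add_distrib]⟩ }
  have hne : ((K : Set (EuclideanSpace ℝ (Fin d)))).Nonempty :=
    ⟨0, ⟨0, fun i => le_rfl, by simp⟩⟩
  have hcl : IsClosed (K : Set (EuclideanSpace ℝ (Fin d))) := coneSet_isClosed d k v
  have hbK : b ∉ K := hb
  obtain ⟨y, hy1, hy2⟩ : ∃ y, (∀ x ∈ K, 0 ≤ ⟪x, y⟫_ℝ) ∧ ⟪y, b⟫_ℝ < 0 := by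
    let C : ProperCone ℝ (EuclideanSpace ℝ (Fin d)) :=
    { carrier := {x | ∃ l : Fin k → ℝ, (∀ i, 0 ≤ l i) ∧ ∑ i, l i • v i = x}
      zero_mem' := ⟨0, fun _ => le_rfl, by simp⟩
      add_mem' := by
        rintro x y ⟨l, hl, rfl⟩ ⟨l', hl', rfl⟩
        exact ⟨l + l', fun i => add_nonneg (hl i) (hl' i), by
          simp [add_smul, Finset.sum_add_distrib]⟩
      smul_mem' := by
        rintro c x ⟨l, hl, rfl⟩
        exact ⟨fun i => (c : ℝ) * l i, fun i => mul_nonneg c.2 (hl i), by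
          simp [NNReal.smul_def, Finset.smul_sum, mul_smul]⟩
      isClosed' := hcl }
    have hbC : b ∉ C := hbK
    obtain ⟨y, hy1, hy2⟩ := C.hyperplane_separation' hbC
    exact ⟨y, fun x hx => hy1 x hx, by rw [real_inner_comm]; exact hy2⟩
  have hvy : ∀ i, 0 ≤ ⟪v i, y⟫_ℝ := by
    intro i
    refine hy1 (v i) ⟨Pi.single i 1, ?_, ?_⟩
    · intro j
      by_cases hji : j = i <;> simp [Pi.single_apply, hji]
    · rw [Finset.sum_eq_single i]
      · simp
      · intro j _ hji; simp [Pi.single_apply, hji]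
      · simp
  have := h y hvy
  rw [real_inner_comm] at hy2
  linarith


/-- `Fin.snoc` packaged as an element of Euclidean space. -/
def snocE {n : ℕ} (a : Fin n → ℝ) (r : ℝ) : EuclideanSpace ℝ (Fin (n+1)) := WithLp.toLp 2 (Fin.snoc a r)

@[simp] lemma snocE_castSucc {n : ℕ} (a : Fin n → ℝ) (r : ℝ) (j : Fin n) :
    snocE a r j.castSucc = a j := by simp [snocE]

@[simp] lemma snocE_last {n : ℕ} (a : Fin n → ℝ) (r : ℝ) :
    snocE a r (Fin.last n) = r := by simp [snocE]

lemma farkas_affine {p n : ℕ} (A : Matrix (Fin p) (Fin n) ℝ) (b : Fin p → ℝ)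
    (c : Fin n → ℝ) (d : ℝ) (hfeas : ∃ x, A.mulVec x ≤ b)
    (h : ∀ x, A.mulVec x ≤ b → c ⬝ᵥ x ≤ d) :
    ∃ l : Fin p → ℝ, (∀ i, 0 ≤ l i) ∧ A.vecMul l = c ∧ l ⬝ᵥ b ≤ d := by
  classical
  have hinner : ∀ (a : Fin n → ℝ) (r : ℝ) (y : EuclideanSpace ℝ (Fin (n+1))),
      ⟪snocE a r, y⟫_ℝ
        = a ⬝ᵥ (fun j => y j.castSucc) + r * y (Fin.last n) := by
    intro a r y
    simp [snocE, PiLp.inner_apply, RCLike.inner_apply, conj_trivial,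
      Fin.sum_univ_castSucc, dotProduct]
    exact congrArg₂ (· + ·) (Finset.sum_congr rfl fun _ _ => mul_comm _ _) (mul_comm _ _)
  set vv : Fin (p+1) → EuclideanSpace ℝ (Fin (n+1)) :=
    Fin.snoc (fun i => snocE (A i) (b i)) (snocE 0 1) with hvv
  set bb : EuclideanSpace ℝ (Fin (n+1)) := snocE c d with hbb
  have hdual : ∀ y : EuclideanSpace ℝ (Fin (n+1)),
      (∀ i, 0 ≤ ⟪vv i, y⟫_ℝ) → 0 ≤ ⟪bb, y⟫_ℝ := by
    intro y hy
    set z : Fin n → ℝ := fun j => y j.castSucc with hz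
    set t : ℝ := y (Fin.last n) with htdef
    have hrow : ∀ i : Fin p, 0 ≤ A i ⬝ᵥ z + b i * t := by
      intro i
      have := hy i.castSucc
      rwa [hvv, Fin.snoc_castSucc, hinner] at this
    have ht0 : 0 ≤ t := by
      have := hy (Fin.last p)
      rwa [hvv, Fin.snoc_last, hinner, zero_dotProduct, one_mul, zero_add] at this
    rw [hbb, hinner]
    show 0 ≤ c ⬝ᵥ z + d * t
    rcases eq_or_lt_of_le ht0 with h0 | hpos
    · -- t = 0
      rw [← h0, mul_zero, add_zero]
      by_contra hcz
      push_neg at hcz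
      obtain ⟨x₀, hx₀⟩ := hfeas
      have hcx₀ : c ⬝ᵥ x₀ ≤ d := h x₀ hx₀
      set s : ℝ := (d + 1 - c ⬝ᵥ x₀) / (-(c ⬝ᵥ z)) with hs
      have hspos : 0 < s := div_pos (by linarith) (by linarith)
      have hxfeas : A.mulVec (x₀ - s • z) ≤ b := by
        intro i
        have hAz : 0 ≤ A i ⬝ᵥ z := by have := hrow i; rw [← h0] at this; linarith
        have he : A.mulVec (x₀ - s • z) i = A.mulVec x₀ i - s * (A i ⬝ᵥ z) := by
          rw [Matrix.mulVec_sub, Pi.sub_apply, Matrix.mulVec_smul]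
          rfl
        rw [he]
        have h1 : 0 ≤ s * (A i ⬝ᵥ z) := mul_nonneg hspos.le hAz
        have h2 := hx₀ i
        linarith
      have hcx := h _ hxfeas
      have hdot : c ⬝ᵥ (x₀ - s • z) = c ⬝ᵥ x₀ - s * (c ⬝ᵥ z) := by
        rw [dotProduct_sub]
        congr 1
        rw [dotProduct_smul]
        rfl
      rw [hdot] at hcx
      have hsmul : s * (-(c ⬝ᵥ z)) = d + 1 - c ⬝ᵥ x₀ := by
        rw [hs, div_mul_cancel₀ _ (by linarith : -(c ⬝ᵥ z) ≠ 0)]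
      nlinarith
    · -- t > 0
      have hxfeas : A.mulVec ((-t⁻¹) • z) ≤ b := by
        intro i
        have he : A.mulVec ((-t⁻¹) • z) i = (-(A i ⬝ᵥ z)) / t := by
          rw [Matrix.mulVec_smul]
          show (-t⁻¹) * (A i ⬝ᵥ z) = _
          ring
        rw [he, div_le_iff₀ hpos]
        have := hrow i
        linarith
      have hcx := h _ hxfeas
      have hdot : c ⬝ᵥ ((-t⁻¹) • z) = (-(c ⬝ᵥ z)) / t := by
        rw [dotProduct_smul]
        show (-t⁻¹) * (c ⬝ᵥ z) = _
        ring
      rw [hdot, div_le_iff₀ hpos] at hcx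
      linarith
  obtain ⟨l', hl', hsum⟩ := mem_cone_of_dual vv bb hdual
  have hcoord : ∀ j : Fin (n+1),
      ∑ i : Fin (p+1), l' i * vv i j = bb j := by
    intro j
    have h1 : (∑ i, l' i • vv i) j = ∑ i, l' i * vv i j := by simp [WithLp.ofLp_sum]
    rw [hsum] at h1
    exact h1.symm
  refine ⟨fun i => l' i.castSucc, fun i => hl' _, ?_, ?_⟩
  · funext j
    have := hcoord j.castSucc
    rw [Fin.sum_univ_castSucc] at this
    simp only [hvv, Fin.snoc_castSucc, Fin.snoc_last, hbb, snocE_castSucc, snocE_last,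
      Pi.zero_apply, mul_zero, add_zero] at this
    simpa [Matrix.vecMul, dotProduct] using this
  · have := hcoord (Fin.last n)
    rw [Fin.sum_univ_castSucc] at this
    simp only [hvv, Fin.snoc_castSucc, Fin.snoc_last, hbb, snocE_castSucc, snocE_last,
      mul_one] at this
    have hlast := hl' (Fin.last p)
    have hdb : (fun i => l' i.castSucc) ⬝ᵥ b = ∑ i : Fin p, l' i.castSucc * b i := rfl
    rw [hdb]
    linarith


/-- Set-containment duality (Lemma 1): for nonempty polyhedron
`X = {x : Hx x ≤ hx}` and polyhedron `Y = {y : Hy y ≤ hy}`, the affine image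
`γ + Γ·X` is contained in `Y` iff there is an entrywise nonnegative matrix `Λ`
with `Λ Hx = Hy Γ` and `Λ hx ≤ hy - Hy γ`. -/
theorem set_containment_duality
    (p q n m : ℕ)
    (Hx : Matrix (Fin p) (Fin n) ℝ) (hx : Fin p → ℝ)
    (Hy : Matrix (Fin q) (Fin m) ℝ) (hy : Fin q → ℝ)
    (γ : Fin m → ℝ) (Γ : Matrix (Fin m) (Fin n) ℝ)
    (hXne : ∃ x : Fin n → ℝ, Hx.mulVec x ≤ hx) :
    ((fun x => γ + Γ.mulVec x) '' {x | Hx.mulVec x ≤ hx} ⊆ {y | Hy.mulVec y ≤ hy}) ↔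
      ∃ Λ : Matrix (Fin q) (Fin p) ℝ,
        (∀ i j, 0 ≤ Λ i j) ∧ Λ * Hx = Hy * Γ ∧
          Λ.mulVec hx ≤ hy - Hy.mulVec γ := by
  constructor
  · intro hsub
    have key : ∀ i : Fin q, ∃ l : Fin p → ℝ, (∀ j, 0 ≤ l j) ∧
        Hx.vecMul l = (fun j => (Hy * Γ) i j) ∧ l ⬝ᵥ hx ≤ hy i - Hy.mulVec γ i := by
      intro i
      apply farkas_affine Hx hx _ _ hXne
      intro x hxfeas
      have hmem : γ + Γ.mulVec x ∈ {y | Hy.mulVec y ≤ hy} :=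
        hsub ⟨x, hxfeas, rfl⟩
      have := hmem i
      rw [Matrix.mulVec_add] at this
      have h2 : Hy.mulVec (Γ.mulVec x) i = (fun j => (Hy * Γ) i j) ⬝ᵥ x := by
        rw [Matrix.mulVec_mulVec]
        rfl
      simp only [Pi.add_apply] at this
      rw [h2] at this
      linarith
    choose l hl0 hlA hlb using key
    refine ⟨Matrix.of (fun i j => l i j), fun i j => hl0 i j, ?_, ?_⟩
    · ext i j
      have := congrFun (hlA i) j
      simpa [Matrix.mul_apply, Matrix.vecMul, dotProduct, mul_comm] using this
    · intro i
      have := hlb i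
      simpa [Matrix.mulVec, dotProduct] using this
  · rintro ⟨Λ, hΛ0, hΛH, hΛh⟩
    rintro y ⟨x, hxfeas, rfl⟩
    intro i
    have h1 : Hy.mulVec (γ + Γ.mulVec x) i
        = Hy.mulVec γ i + (Λ * Hx).mulVec x i := by
      rw [Matrix.mulVec_add, hΛH, Matrix.mulVec_mulVec]
      rfl
    have h2 : (Λ * Hx).mulVec x i = Λ.mulVec (Hx.mulVec x) i := by
      rw [Matrix.mulVec_mulVec]
    have hrfl : ∀ w : Fin p → ℝ, Λ.mulVec w i = ∑ j, Λ i j * w j := fun w => rfl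
    have h3 : ∑ j, Λ i j * Hx.mulVec x j ≤ ∑ j, Λ i j * hx j :=
      Finset.sum_le_sum fun j _ => mul_le_mul_of_nonneg_left (hxfeas j) (hΛ0 i j)
    have h4 := hΛh i
    simp only [Pi.sub_apply] at h4
    rw [h1, h2, hrfl]
    rw [hrfl] at h4
    linarith
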